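/- (Unique decoding with poles.) Let t ≤ ⌊(L − d_f − d_g + 1)/2⌋. Let R = (ϑ_j, r_j)_{1≤j≤n} be a reduced received word (gcd((x−α_j)^{ϑ_j}, r_j) = 1 for all j) and suppose there is a reduced f/g with deg f_i < d_f, deg g < d_g such that the error locator Λ between Ev^∞(f/g) and R satisfies deg Λ ≤ t. Then every solution (φ, ψ_1,…,ψ_ℓ) of the key equations CRT_M((x−α_j)^{ϑ_j})·ψ_i ≡ φ·R_i mod M with deg φ < d_g + t and deg ψ_i < d_f + t lies in (Λg, Λf_1,…,Λf_ℓ)·F_q[x]. -/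
import Mathlib


open Polynomial

/-- Unique decoding with poles: for `t ≤ ⌊(L − d_f − d_g + 1)/2⌋`, a reduced received word
`(ϑ_j, r_j)_j` and a reduced `f/g` whose error locator `Λ` relative to the received word has
degree `≤ t`, every solution `(φ, ψ)` of the key equations
`CRT_M((x−α_j)^{ϑ_j})·ψ_i ≡ φ·R_i (mod M)` with the degree bounds lies in
`(Λg, Λf_1,…,Λf_ℓ)·F_q[x]`. -/
theorem unique_decoding_with_poles {F : Type*} [Field F] [Fintype F] [DecidableEq F]
    (n ℓ : ℕ) [NeZero ℓ]
    (α : Fin n → F) (hα : Function.Injective α)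
    (lam ϑ : Fin n → ℕ) (hlam : ∀ j, 0 < lam j) (hϑ : ∀ j, ϑ j ≤ lam j)
    (M : F[X]) (hM : M = ∏ j, (X - C (α j)) ^ lam j)
    (L : ℕ) (hL : L = M.natDegree)
    (df dg t : ℕ) (hdf : 0 < df) (hdg : 0 < dg) (hsum : df + dg ≤ L + 1)
    (ht : 2 * (t : ℤ) ≤ (L : ℤ) - df - dg + 1)
    -- the received reductions `r_{i,j}` (as lifts), reduced columns
    (r : Fin ℓ → Fin n → F[X])
    (hreduced : ∀ j, 0 < ϑ j → ∃ i, ¬ (X - C (α j)) ∣ r i j)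
    -- `R i` is the CRT interpolant of row `i`
    (R : Fin ℓ → F[X]) (hR : ∀ i j, (X - C (α j)) ^ lam j ∣ (R i - r i j))
    -- `T = CRT_M((x−α_j)^{ϑ_j})`
    (T : F[X]) (hT : ∀ j, (X - C (α j)) ^ lam j ∣ (T - (X - C (α j)) ^ ϑ j))
    (f : Fin ℓ → F[X]) (g : F[X]) (hg : g ≠ 0)
    (hdegf : ∀ i, (f i).degree < (df : ℕ)) (hdegg : g.degree < (dg : ℕ))
    (hred : gcd (Finset.univ.gcd f) g = 1)
    -- `μ j` is the truncated valuation of `ẽ_j = (x−α_j)^{ϑ_j} f − g r_j`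
    (μ : Fin n → ℕ)
    (hμ : ∀ j, μ j = min (lam j) (Finset.univ.inf' Finset.univ_nonempty
        (fun i => if (X - C (α j)) ^ ϑ j * f i - g * r i j = 0 then lam j
          else rootMultiplicity (α j) ((X - C (α j)) ^ ϑ j * f i - g * r i j))))
    (Λ : F[X]) (hΛ : Λ = ∏ j, (X - C (α j)) ^ (lam j - μ j))
    (hΛt : Λ.natDegree ≤ t) :
    ∀ (φ : F[X]) (ψ : Fin ℓ → F[X]),
      (∀ i, M ∣ (T * ψ i - φ * R i)) →
      φ.degree < (dg + t : ℕ) → (∀ i, (ψ i).degree < (df + t : ℕ)) →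
      ∃ p : F[X], φ = p * (Λ * g) ∧ ∀ i, ψ i = p * (Λ * f i) := by
  intro φ ψ hkey hdegφ hdegψ
  classical
  have hqne : ∀ j, (X - C (α j) : F[X]) ≠ 0 := fun j => X_sub_C_ne_zero (α j)
  have hdvdM : ∀ j, (X - C (α j)) ^ lam j ∣ M := by
    intro j; rw [hM]; exact Finset.dvd_prod_of_mem _ (Finset.mem_univ j)
  -- Step 1: columnwise key equations
  have hcol : ∀ i j, (X - C (α j)) ^ lam j ∣
      ((X - C (α j)) ^ ϑ j * ψ i - φ * r i j) := by
    intro i j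
    have h1 : (X - C (α j)) ^ lam j ∣ (T * ψ i - φ * R i) := (hdvdM j).trans (hkey i)
    have h2 : (X - C (α j)) ^ lam j ∣
        (T * ψ i - φ * R i) - (T - (X - C (α j)) ^ ϑ j) * ψ i + (R i - r i j) * φ :=
      dvd_add (dvd_sub h1 ((hT j).mul_right _)) ((hR i j).mul_right _)
    convert h2 using 1; ring
  -- Step 2: (x-α_j)^{ϑ_j} divides φ
  have hφdvd : ∀ j, (X - C (α j)) ^ ϑ j ∣ φ := by
    intro j
    rcases Nat.eq_zero_or_pos (ϑ j) with h0 | h0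
    · simp [h0]
    · obtain ⟨i1, hi1⟩ := hreduced j h0
      have h3 : (X - C (α j)) ^ ϑ j ∣ ((X - C (α j)) ^ ϑ j * ψ i1 - φ * r i1 j) :=
        (pow_dvd_pow _ (hϑ j)).trans (hcol i1 j)
      have h4 : (X - C (α j)) ^ ϑ j ∣ φ * r i1 j := by
        have := dvd_sub (dvd_mul_right ((X - C (α j)) ^ ϑ j) (ψ i1)) h3
        simpa using this
      exact (((prime_X_sub_C (α j)).irreducible.coprime_iff_not_dvd.mpr
        hi1).pow_left).dvd_of_dvd_mul_right h4
  -- Step 3: (x-α_j)^{μ_j} divides each error component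
  have he_dvd : ∀ i j, (X - C (α j)) ^ μ j ∣ ((X - C (α j)) ^ ϑ j * f i - g * r i j) := by
    intro i j
    by_cases hz : (X - C (α j)) ^ ϑ j * f i - g * r i j = 0
    · simp [hz]
    · have h1 : μ j ≤ (if (X - C (α j)) ^ ϑ j * f i - g * r i j = 0 then lam j
          else rootMultiplicity (α j) ((X - C (α j)) ^ ϑ j * f i - g * r i j)) := by
        rw [hμ j]
        exact le_trans (min_le_right _ _) (Finset.inf'_le _ (Finset.mem_univ i))
      rw [if_neg hz] at h1
      exact (le_rootMultiplicity_iff hz).mp h1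
  have hmulelam : ∀ j, μ j ≤ lam j := fun j => (hμ j) ▸ min_le_left _ _
  -- Step 4: ϑ_j + μ_j ≤ lam_j + v_j where v_j is the valuation of g at α_j
  have hA : ∀ j, ϑ j + μ j ≤ lam j + rootMultiplicity (α j) g := by
    intro j
    set v := rootMultiplicity (α j) g with hv
    by_cases hvt : ϑ j ≤ v
    · have := hmulelam j; omega
    · push_neg at hvt
      obtain ⟨i1, hi1⟩ := hreduced j (by omega)
      have hr0 : r i1 j ≠ 0 := fun h => hi1 (h ▸ dvd_zero _)
      have hgr0 : g * r i1 j ≠ 0 := mul_ne_zero hg hr0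
      have hrm0 : rootMultiplicity (α j) (r i1 j) = 0 :=
        rootMultiplicity_eq_zero (fun h => hi1 (dvd_iff_isRoot.mpr h))
      have hgr : rootMultiplicity (α j) (g * r i1 j) = v := by
        rw [rootMultiplicity_mul hgr0, hrm0, add_zero]
      have hnd : ¬ (X - C (α j)) ^ (v + 1) ∣ g * r i1 j := by
        intro h
        have := (le_rootMultiplicity_iff hgr0).mpr h
        omega
      have hee : ¬ (X - C (α j)) ^ (v + 1) ∣ ((X - C (α j)) ^ ϑ j * f i1 - g * r i1 j) := by
        intro h
        have h2 : (X - C (α j)) ^ (v + 1) ∣ (X - C (α j)) ^ ϑ j * f i1 :=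
          (pow_dvd_pow _ (by omega)).mul_right _
        have h3 := dvd_sub h2 h
        apply hnd
        simpa using h3
      have hez : (X - C (α j)) ^ ϑ j * f i1 - g * r i1 j ≠ 0 := by
        intro h; exact hee (by simp [h])
      have hre : rootMultiplicity (α j) ((X - C (α j)) ^ ϑ j * f i1 - g * r i1 j) ≤ v := by
        by_contra hc
        push_neg at hc
        exact hee ((le_rootMultiplicity_iff hez).mp (by omega))
      have hμv : μ j ≤ v := by
        have h1 : μ j ≤ (if (X - C (α j)) ^ ϑ j * f i1 - g * r i1 j = 0 then lam j
            else rootMultiplicity (α j) ((X - C (α j)) ^ ϑ j * f i1 - g * r i1 j)) := by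
          rw [hμ j]
          exact le_trans (min_le_right _ _) (Finset.inf'_le _ (Finset.mem_univ i1))
        rw [if_neg hez] at h1
        omega
      have := hϑ j
      omega
  -- Step 5: (x-α_j)^{μ_j} divides the syzygy D_i = ψ_i g - φ f_i
  have hD : ∀ i j, (X - C (α j)) ^ μ j ∣ (ψ i * g - φ * f i) := by
    intro i j
    have key : (X - C (α j)) ^ ϑ j * (ψ i * g - φ * f i) =
        g * ((X - C (α j)) ^ ϑ j * ψ i - φ * r i j)
          - φ * ((X - C (α j)) ^ ϑ j * f i - g * r i j) := by ring
    have h1 : (X - C (α j)) ^ (ϑ j + μ j) ∣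
        g * ((X - C (α j)) ^ ϑ j * ψ i - φ * r i j) := by
      have h1' : (X - C (α j)) ^ (rootMultiplicity (α j) g + lam j) ∣
          g * ((X - C (α j)) ^ ϑ j * ψ i - φ * r i j) := by
        rw [pow_add]
        exact mul_dvd_mul (pow_rootMultiplicity_dvd g (α j)) (hcol i j)
      exact (pow_dvd_pow _ (by have := hA j; omega)).trans h1'
    have h2 : (X - C (α j)) ^ (ϑ j + μ j) ∣
        φ * ((X - C (α j)) ^ ϑ j * f i - g * r i j) := by
      rw [pow_add]
      exact mul_dvd_mul (hφdvd j) (he_dvd i j)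
    have h3 : (X - C (α j)) ^ (ϑ j + μ j) ∣
        (X - C (α j)) ^ ϑ j * (ψ i * g - φ * f i) := key ▸ dvd_sub h1 h2
    rw [pow_add] at h3
    exact (mul_dvd_mul_iff_left (pow_ne_zero (ϑ j) (hqne j))).mp h3
  -- degrees
  have hqprodnd : ∀ (e : Fin n → ℕ),
      (∏ j, (X - C (α j)) ^ e j).natDegree = ∑ j, e j := by
    intro e
    rw [natDegree_prod _ _ (fun j _ => pow_ne_zero _ (hqne j))]
    simp [natDegree_pow]
  have hLsum : L = ∑ j, lam j := by rw [hL, hM, hqprodnd]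
  have hSt : L ≤ (∑ j, μ j) + t := by
    have h1 : Λ.natDegree = ∑ j, (lam j - μ j) := by rw [hΛ, hqprodnd]
    have h2 : ∑ j, lam j ≤ (∑ j, μ j) + ∑ j, (lam j - μ j) := by
      rw [← Finset.sum_add_distrib]
      exact Finset.sum_le_sum fun j _ => by have := hmulelam j; omega
    omega
  have h2t : df + dg + 2 * t ≤ L + 1 := by
    have : (df : ℤ) + dg + 2 * t ≤ L + 1 := by linarith
    exact_mod_cast this
  have hnd : ∀ (p : F[X]) (k : ℕ), 0 < k → p.degree < (k : ℕ) → p.natDegree < k := by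
    intro p k hk h
    by_cases hp : p = 0
    · simpa [hp]
    · exact (natDegree_lt_iff_degree_lt hp).mpr h
  -- Step 7: the syzygies vanish
  have hD0 : ∀ i, ψ i * g = φ * f i := by
    intro i
    by_contra hne
    have hDne : ψ i * g - φ * f i ≠ 0 := sub_ne_zero.mpr hne
    have hprodD : (∏ j, (X - C (α j)) ^ μ j) ∣ (ψ i * g - φ * f i) :=
      Fintype.prod_dvd_of_coprime
        (fun j k hjk => ((pairwise_coprime_X_sub_C hα) hjk).pow) (fun j => hD i j)
    have h1 : (∑ j, μ j) ≤ (ψ i * g - φ * f i).natDegree := by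
      have := natDegree_le_of_dvd hprodD hDne
      rwa [hqprodnd] at this
    have h2 : (ψ i * g - φ * f i).natDegree ≤
        max ((ψ i).natDegree + g.natDegree) (φ.natDegree + (f i).natDegree) :=
      (natDegree_sub_le _ _).trans (max_le_max natDegree_mul_le natDegree_mul_le)
    have b1 : (ψ i).natDegree < df + t := hnd _ _ (by omega) (hdegψ i)
    have b2 : g.natDegree < dg := hnd _ _ hdg hdegg
    have b3 : φ.natDegree < dg + t := hnd _ _ (by omega) hdegφ
    have b4 : (f i).natDegree < df := hnd _ _ hdf (hdegf i)
    have h3 : max ((ψ i).natDegree + g.natDegree) (φ.natDegree + (f i).natDegree)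
        ≤ df + dg + t - 2 := max_le (by omega) (by omega)
    omega
  -- Step 9: g divides φ
  have hgφ : g ∣ φ := by
    have hgdvd : g ∣ Finset.univ.gcd (fun i => φ * f i) :=
      Finset.dvd_gcd (fun i _ => ⟨ψ i, by rw [← hD0 i]; ring⟩)
    rw [Finset.gcd_mul_left] at hgdvd
    have hcop : IsCoprime g (Finset.univ.gcd f) := by
      have hu : IsUnit (gcd (Finset.univ.gcd f) g) := by rw [hred]; exact isUnit_one
      exact ((gcd_isUnit_iff _ _).mp hu).symm
    exact (hcop.dvd_of_dvd_mul_right hgdvd).trans (normalize_associated φ).dvd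
  obtain ⟨p0, hp0⟩ := hgφ
  have hψp : ∀ i, ψ i = p0 * f i := by
    intro i
    apply mul_right_cancel₀ hg
    rw [hD0 i, hp0]; ring
  -- Step 11: Λ divides p0
  by_cases hp0z : p0 = 0
  · refine ⟨0, by simp [hp0, hp0z], fun i => by simp [hψp i, hp0z]⟩
  · have hΛp : ∀ j, (X - C (α j)) ^ (lam j - μ j) ∣ p0 := by
      intro j
      by_cases hjz : lam j ≤ μ j
      · simp [Nat.sub_eq_zero_of_le hjz]
      · push_neg at hjz
        have hinf : Finset.univ.inf' Finset.univ_nonempty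
            (fun i => if (X - C (α j)) ^ ϑ j * f i - g * r i j = 0 then lam j
              else rootMultiplicity (α j) ((X - C (α j)) ^ ϑ j * f i - g * r i j)) = μ j := by
          have h := hμ j
          omega
        obtain ⟨i0, -, hi0⟩ := Finset.exists_mem_eq_inf' Finset.univ_nonempty
          (fun i => if (X - C (α j)) ^ ϑ j * f i - g * r i j = 0 then lam j
            else rootMultiplicity (α j) ((X - C (α j)) ^ ϑ j * f i - g * r i j))
        rw [hinf] at hi0
        have hez : (X - C (α j)) ^ ϑ j * f i0 - g * r i0 j ≠ 0 := by
          intro h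
          rw [if_pos h] at hi0
          omega
        rw [if_neg hez] at hi0
        have hk : (X - C (α j)) ^ lam j ∣ p0 * ((X - C (α j)) ^ ϑ j * f i0 - g * r i0 j) := by
          have h := hcol i0 j
          rw [hψp i0, hp0] at h
          convert h using 1
          ring
        have hnez : p0 * ((X - C (α j)) ^ ϑ j * f i0 - g * r i0 j) ≠ 0 :=
          mul_ne_zero hp0z hez
        have h5 := (le_rootMultiplicity_iff hnez).mpr hk
        rw [rootMultiplicity_mul hnez, ← hi0] at h5
        exact (le_rootMultiplicity_iff hp0z).mp (by omega)
    obtain ⟨p, hp⟩ : Λ ∣ p0 := by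
      rw [hΛ]
      exact Fintype.prod_dvd_of_coprime
        (fun j k hjk => ((pairwise_coprime_X_sub_C hα) hjk).pow) hΛp
    exact ⟨p, by rw [hp0, hp]; ring, fun i => by rw [hψp i, hp]; ring⟩
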